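/- arXiv:1908.06199 — 2 statements merged into one kernel-verified Lean document; each statement's English description precedes it below -/
import Mathlib

section
/- Let C_n = C_n^{(3/2)} denote the Gegenbauer polynomial with parameter 3/2, P_n the Legendre polynomial, and for real parameters α_L, α_R set H(n) = 1 + n²(α_L + α_R + (n−1)(n+1)α_Lα_R). Then the polynomial M_n(α_L,α_R,x) = (H(n) + n·(α_L+α_R+2n(n+1)α_Lα_R))·P_n(x) + (α_L(1+α_Rn(n+1))(1−x) − α_R(1+α_Ln(n+1))(1+x))·P_n'(x) satisfies the identity M_n(α_L,α_R,x) = (C_n(x)·H(n) − C_{n−2}(x)·H(n+1)) / (2n+1) + C_{n−1}(x)·(α_L − α_R) for n ≥ 2. -/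
open Polynomial

/-- The Legendre polynomial of degree `n` (Rodrigues' formula). -/
noncomputable def legendre (n : ℕ) : Polynomial ℝ :=
  C ((1 : ℝ) / (2 ^ n * n.factorial)) * derivative^[n] ((X ^ 2 - 1) ^ n)

lemma itd_add (k : ℕ) (p q : Polynomial ℝ) :
    derivative^[k] (p + q) = derivative^[k] p + derivative^[k] q := by
  induction k generalizing p q with
  | zero => simp
  | succ k ih => simp [Function.iterate_succ_apply, derivative_add, ih]

lemma dX (k : ℕ) (g : Polynomial ℝ) :
    derivative^[k+1] (X * g) = X * derivative^[k+1] g + (((k:ℕ):Polynomial ℝ)+1) * derivative^[k] g := by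
  induction k generalizing g with
  | zero => simp [derivative_mul]; ring
  | succ k ih =>
    rw [Function.iterate_succ_apply, derivative_mul, derivative_X, one_mul, itd_add, ih,
      ← Function.iterate_succ_apply, ← Function.iterate_succ_apply]
    push_cast
    ring

lemma dX2 (k : ℕ) (g : Polynomial ℝ) :
    derivative^[k+2] ((X^2-1) * g) = (X^2-1) * derivative^[k+2] g
      + 2*(((k:ℕ):Polynomial ℝ)+2) * X * derivative^[k+1] g
      + (((k:ℕ):Polynomial ℝ)+2)*(((k:ℕ):Polynomial ℝ)+1) * derivative^[k] g := by
  induction k generalizing g with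
  | zero =>
    simp only [Function.iterate_succ, Function.iterate_zero, Function.comp_apply, id_eq]
    simp only [derivative_mul, derivative_add, derivative_sub, derivative_one,
      derivative_X_pow, derivative_X, derivative_zero, map_ofNat, derivative_ofNat,
      Nat.cast_ofNat, pow_one, C_1]
    push_cast
    simp only [Nat.cast_one, C_1]
    ring
  | succ k ih =>
    rw [Function.iterate_succ_apply, derivative_mul]
    have h1 : derivative (X^2 - 1 : Polynomial ℝ) * g = C 2 * (X * g) := by
      simp [derivative_sub, derivative_X_pow]; rw [show (C 2 : Polynomial ℝ) = 2 from map_ofNat C 2]; ring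
    rw [h1, itd_add, iterate_derivative_C_mul, ih]
    have h2 := dX (k+1) g
    rw [show k+1+1 = k+2 from rfl] at h2
    rw [h2, ← Function.iterate_succ_apply, ← Function.iterate_succ_apply,
      ← Function.iterate_succ_apply, map_ofNat C 2]
    push_cast
    ring

lemma hderiv (k : ℕ) :
    derivative ((X^2-1 : Polynomial ℝ)^(k+2)) = C (2*((k:ℝ)+2)) * (X * (X^2-1)^(k+1)) := by
  rw [derivative_pow]
  simp only [derivative_sub, derivative_one, derivative_X_pow, sub_zero,
    Nat.cast_add, Nat.cast_ofNat, Nat.add_sub_cancel, pow_one, map_add, map_ofNat, map_mul]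
  push_cast
  ring

lemma coefc (k : ℕ) :
    ((1:ℝ) / (2 ^ (k+2) * (k+2).factorial)) * (2*((k:ℝ)+2)) = (1:ℝ) / (2 ^ (k+1) * (k+1).factorial) := by
  have hf : ((k+2).factorial : ℝ) = ((k:ℝ)+2) * ((k+1).factorial : ℝ) := by
    rw [show k+2 = (k+1)+1 from rfl, Nat.factorial_succ]; push_cast; ring
  have h1 : ((k+1).factorial : ℝ) ≠ 0 := Nat.cast_ne_zero.2 (Nat.factorial_ne_zero _)
  have h2 : ((k:ℝ)+2) ≠ 0 := by positivity
  have h3 : (2:ℝ)^(k+2) ≠ 0 := by positivity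
  rw [hf, pow_succ]
  field_simp

lemma legendre_star (k : ℕ) :
    legendre (k+2) = X * legendre (k+1)
      + C ((1:ℝ) / (2 ^ (k+1) * (k+1).factorial)) * ((((k:ℕ):Polynomial ℝ))+1)
        * derivative^[k] ((X^2-1)^(k+1)) := by
  unfold legendre
  rw [show k+2 = (k+1)+1 from rfl, Function.iterate_succ_apply,
    show (k+1)+1 = k+2 from rfl, hderiv k, iterate_derivative_C_mul, dX k,
    show ((X:Polynomial ℝ)^2-1) = (X^2-1) from rfl]
  have hc : C ((1:ℝ) / (2 ^ (k+2) * (k+2).factorial)) * C (2*((k:ℝ)+2))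
      = C ((1:ℝ) / (2 ^ (k+1) * (k+1).factorial)) := by rw [← C_mul, coefc k]
  linear_combination (X * derivative^[k+1] (((X:Polynomial ℝ)^2-1)^(k+1))
    + (((k:ℕ):Polynomial ℝ)+1) * derivative^[k] (((X:Polynomial ℝ)^2-1)^(k+1))) * hc

lemma key1 (k : ℕ) :
    derivative (legendre (k+2)) = (((k:ℕ):Polynomial ℝ)+2) * legendre (k+1)
      + X * derivative (legendre (k+1)) := by
  have h0 : derivative (derivative^[k] (((X:Polynomial ℝ)^2-1)^(k+1)))
      = derivative^[k+1] (((X:Polynomial ℝ)^2-1)^(k+1)) :=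
    (Function.iterate_succ_apply' derivative k _).symm
  rw [legendre_star k]
  simp only [derivative_add, derivative_mul, derivative_X, derivative_C, derivative_natCast,
    derivative_one, one_mul, zero_mul, add_zero, zero_add, mul_zero, mul_one]
  rw [h0]
  unfold legendre
  simp only [derivative_C_mul]
  ring

lemma hCc (k : ℕ) :
    (C ((1:ℝ) / (2 ^ (k+1) * (k+1).factorial)) : Polynomial ℝ)
      = 2*(((k:ℕ):Polynomial ℝ)+2) * C ((1:ℝ) / (2 ^ (k+2) * (k+2).factorial)) := by
  have : ((1:ℝ) / (2 ^ (k+1) * (k+1).factorial)) = (2*((k:ℝ)+2)) * ((1:ℝ) / (2 ^ (k+2) * (k+2).factorial)) := by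
    rw [← coefc k]; ring
  rw [this, C_mul]
  congr 1
  simp [map_mul, map_add, map_ofNat, C_eq_natCast]

lemma pell (k : ℕ) :
    (((k:ℕ):Polynomial ℝ)+2) * legendre (k+2)
      = ((X:Polynomial ℝ)^2-1) * derivative (legendre (k+1))
        + (((k:ℕ):Polynomial ℝ)+2) * X * legendre (k+1) := by
  have hpow : ((X:Polynomial ℝ)^2-1)^(k+2) = ((X:Polynomial ℝ)^2-1) * ((X:Polynomial ℝ)^2-1)^(k+1) := by
    rw [pow_succ]; ring
  have h1 := legendre_star k
  have h2 := dX2 k (((X:Polynomial ℝ)^2-1)^(k+1))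
  have h3 : legendre (k+2)
      = C ((1:ℝ) / (2 ^ (k+2) * (k+2).factorial)) * derivative^[k+2] (((X:Polynomial ℝ)^2-1) * ((X:Polynomial ℝ)^2-1)^(k+1)) := by
    unfold legendre; rw [hpow]
  have h4 : legendre (k+1)
      = C ((1:ℝ) / (2 ^ (k+1) * (k+1).factorial)) * derivative^[k+1] (((X:Polynomial ℝ)^2-1)^(k+1)) := rfl
  have h5 : derivative (legendre (k+1))
      = C ((1:ℝ) / (2 ^ (k+1) * (k+1).factorial)) * derivative^[k+2] (((X:Polynomial ℝ)^2-1)^(k+1)) := by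
    unfold legendre
    rw [derivative_C_mul]
    congr 1
    rw [show k+2 = (k+1)+1 from rfl]
    exact (Function.iterate_succ_apply' derivative (k+1) _).symm
  have hc := hCc k
  linear_combination (-((((k:ℕ):Polynomial ℝ))+2)) * h1
    + (C ((1:ℝ) / (2 ^ (k+1) * (k+1).factorial)) : Polynomial ℝ) * h2
    + (2*((((k:ℕ):Polynomial ℝ))+2)) * h3
    + (-2*((((k:ℕ):Polynomial ℝ))+2)*X) * h4
    + (-(((X:Polynomial ℝ)^2-1))) * h5
    + (-(derivative^[k+2] (((X:Polynomial ℝ)^2-1) * ((X:Polynomial ℝ)^2-1)^(k+1)))) * hc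

lemma key2 (k : ℕ) :
    X * derivative (legendre (k+2)) = (((k:ℕ):Polynomial ℝ)+2) * legendre (k+2)
      + derivative (legendre (k+1)) := by
  linear_combination X * key1 k - pell k

/-- The Gegenbauer polynomial `C_n^{(3/2)}(x) = P_{n+1}'(x)`. -/
noncomputable def gegenbauer32 (n : ℕ) : Polynomial ℝ := derivative (legendre (n + 1))

/-- `H(n) = 1 + n²(α_L + α_R + (n−1)(n+1)α_Lα_R)`. -/
noncomputable def Hc0 (αL αR : ℝ) (n : ℕ) : ℝ :=
  1 + (n : ℝ) ^ 2 * (αL + αR + ((n : ℝ) - 1) * ((n : ℝ) + 1) * αL * αR)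

/-- `M_n(α_L,α_R,x)` (formula (5) of Section 2). -/
noncomputable def Mc0 (αL αR : ℝ) (n : ℕ) : Polynomial ℝ :=
  C (Hc0 αL αR n + (n : ℝ) * (αL + αR + 2 * (n : ℝ) * ((n : ℝ) + 1) * αL * αR)) * legendre n +
    (C (αL * (1 + αR * (n : ℝ) * ((n : ℝ) + 1))) * (1 - X) -
      C (αR * (1 + αL * (n : ℝ) * ((n : ℝ) + 1))) * (1 + X)) * derivative (legendre n)

/-- Formula (A.2.1): `M_n(α_L,α_R,x) = (C_n(x)·H(n) − C_{n−2}(x)·H(n+1)) / (2n+1)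
 + C_{n−1}(x)·(α_L − α_R)` for `n ≥ 2`, where `C_m = C_m^{(3/2)}`. -/
theorem stmt_5 (n : ℕ) (hn : 2 ≤ n) (αL αR : ℝ) :
    Mc0 αL αR n =
      C ((1 : ℝ) / (2 * (n : ℝ) + 1)) *
        (gegenbauer32 n * C (Hc0 αL αR n) - gegenbauer32 (n - 2) * C (Hc0 αL αR (n + 1))) +
      gegenbauer32 (n - 1) * C (αL - αR) := by
  obtain ⟨m, rfl⟩ : ∃ m, n = m + 2 := ⟨n - 2, by omega⟩
  simp only [Mc0, Hc0, gegenbauer32, show m+2-2 = m from rfl, show m+2-1 = m+1 from rfl,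
    show m+1+1 = m+2 from rfl, show m+2+1 = m+3 from rfl, show m+2+1+1 = m+4 from rfl]
  apply Polynomial.funext
  intro x
  have e1 := key1 (m+1)
  rw [show m+1+2 = m+3 from rfl, show m+1+1 = m+2 from rfl] at e1
  have e2 := key2 m
  have e1x := congrArg (eval x) e1
  have e2x := congrArg (eval x) e2
  simp only [eval_add, eval_mul, eval_sub, eval_C, eval_X, eval_one, eval_natCast,
    eval_ofNat] at e1x e2x ⊢
  have hs : eval x (derivative (legendre (m+1)))
      = x * eval x (derivative (legendre (m+2))) - ((m:ℝ)+2) * eval x (legendre (m+2)) := by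
    linear_combination -e2x
  rw [e1x, hs]
  push_cast
  have hne : 2*((m:ℝ)+2)+1 ≠ 0 := by positivity
  field_simp
  ring
end

section
/- Let δ = √((n+2)/n) and let C_m = C_m^{(3/2)} be the Gegenbauer polynomials with parameter 3/2. Then R_n(x) = C_n(x) + δ·C_{n−1}(x) has n simple real roots, all contained in the open interval (−1,1). -/
open Polynomial

/-- Formula (12): the node polynomial `R_n = C_n + δ·C_{n−1}` with `δ = √((n+2)/n)`. -/
noncomputable def Rpoly (n : ℕ) : Polynomial ℝ :=
  gegenbauer32 n + C (Real.sqrt (((n : ℝ) + 2) / (n : ℝ))) * gegenbauer32 (n - 1)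

lemma stmt8_iterDerivXMul (k : ℕ) (v : ℝ[X]) :
    derivative^[k+1] (X * v) = X * derivative^[k+1] v + C ((k:ℝ)+1) * derivative^[k] v := by
  induction k generalizing v with
  | zero => simp [derivative_mul]; ring
  | succ k ih =>
    have hC : (C ((k:ℝ)+1+1) : ℝ[X]) = C ((k:ℝ)+1) + 1 := by rw [map_add, map_one]
    calc derivative^[k+1+1] (X*v) = derivative (derivative^[k+1] (X*v)) :=
          Function.iterate_succ_apply' _ _ _
    _ = derivative (X * derivative^[k+1] v + C ((k:ℝ)+1) * derivative^[k] v) := by rw [ih]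
    _ = X * derivative^[k+1+1] v + C ((↑(k+1):ℝ)+1) * derivative^[k+1] v := by
        rw [derivative_add, derivative_mul, derivative_mul, derivative_X, derivative_C,
          ← Function.iterate_succ_apply' derivative (k+1) v,
          ← Function.iterate_succ_apply' derivative k v]
        push_cast
        rw [hC]
        ring

lemma stmt8_derivSq (m : ℕ) :
    derivative (((X:ℝ[X])^2 - 1)^(m+1)) = C (2*(m:ℝ)+2) * (X * (((X:ℝ[X])^2-1)^m)) := by
  have hd : derivative ((X:ℝ[X])^2 - 1) = C 2 * X := by
    simp [derivative_sub, derivative_X_pow]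
    rw [← C_1, ← C_add]; norm_num
  rw [derivative_pow, hd]
  have hC : (C (2*(m:ℝ)+2) : ℝ[X]) = C ((↑(m+1):ℝ)) * C 2 := by
    rw [← C_mul]; push_cast; ring_nf
  rw [hC]
  push_cast
  ring

lemma stmt8_raw (m : ℕ) :
    derivative^[m+3] (((X:ℝ[X])^2-1)^(m+2)) =
      C (2*(m:ℝ)+4) * (X * derivative^[m+2] (((X:ℝ[X])^2-1)^(m+1))
        + C ((m:ℝ)+2) * derivative^[m+1] (((X:ℝ[X])^2-1)^(m+1))) := by
  have h1 : derivative^[m+3] (((X:ℝ[X])^2-1)^(m+2))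
      = derivative^[m+2] (derivative (((X:ℝ[X])^2-1)^(m+2))) := by
    rw [← Function.iterate_succ_apply]
  rw [h1, stmt8_derivSq (m+1), iterate_derivative_C_mul, stmt8_iterDerivXMul (m+1)]
  have : (2*(↑(m+1):ℝ)+2) = 2*(m:ℝ)+4 := by push_cast; ring
  rw [this]
  push_cast
  ring

lemma stmt8_geg_succ (m : ℕ) :
    gegenbauer32 (m+1) = X * gegenbauer32 m + C ((m:ℝ)+2) * legendre (m+1) := by
  have hfac : (((m+1+1).factorial : ℕ) : ℝ) = ((m:ℝ)+2) * ((m+1).factorial : ℝ) := by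
    rw [Nat.factorial_succ]; push_cast; ring
  have hfpos : (0:ℝ) < ((m+1).factorial : ℝ) := by exact_mod_cast (m+1).factorial_pos
  have hc : (C ((1:ℝ) / (2 ^ (m+1) * (m+1).factorial)) : ℝ[X]) =
      C ((1:ℝ) / (2 ^ (m+1+1) * (m+1+1).factorial)) * C (2*(m:ℝ)+4) := by
    rw [← C_mul]
    congr 1
    rw [hfac]
    rw [pow_succ]
    field_simp
    ring
  unfold gegenbauer32 legendre
  rw [derivative_C_mul, derivative_C_mul, hc,
    ← Function.iterate_succ_apply' derivative (m+1+1),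
    ← Function.iterate_succ_apply' derivative (m+1)]
  simp only [Nat.succ_eq_add_one]
  have h3 : m+1+1+1 = m+3 := rfl
  have h4 : m+1+1 = m+2 := rfl
  rw [h3, stmt8_raw m]
  ring

lemma stmt8_facpos (m : ℕ) : (0:ℝ) < (m.factorial : ℝ) := by exact_mod_cast m.factorial_pos

lemma stmt8_split (m : ℕ) : (((X:ℝ[X]) ^ 2 - 1) ^ m) = (X - C 1) ^ m * (X - C (-1)) ^ m := by
  rw [← mul_pow]
  congr 1
  rw [map_neg, map_one]
  ring

lemma stmt8_legendre_eval_one (m : ℕ) : (legendre m).eval 1 = 1 := by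
  unfold legendre
  rw [stmt8_split, iterate_derivative_mul, eval_mul, eval_finset_sum]
  rw [Finset.sum_eq_single 0]
  · rw [Nat.choose_zero_right, one_smul, Nat.sub_zero, Function.iterate_zero_apply,
      iterate_derivative_X_sub_pow_self, eval_mul, eval_natCast, eval_pow, eval_sub, eval_X,
      eval_C, eval_C]
    norm_num
    field_simp
  · intro k hk hk0
    rw [iterate_derivative_X_sub_pow, eval_smul, eval_mul, eval_smul, eval_pow, eval_sub,
      eval_X, eval_C]
    have hkm : m - (m - k) = k := Nat.sub_sub_self (by
      have := Finset.mem_range.mp hk; omega)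
    rw [hkm]
    simp [zero_pow hk0]
  · intro h
    exact absurd (Finset.mem_range.mpr (Nat.succ_pos m)) h

lemma stmt8_legendre_eval_negone (m : ℕ) : (legendre m).eval (-1) = (-1)^m := by
  unfold legendre
  rw [stmt8_split, iterate_derivative_mul, eval_mul, eval_finset_sum]
  rw [Finset.sum_eq_single m]
  · rw [Nat.choose_self, one_smul, Nat.sub_self, Function.iterate_zero_apply,
      iterate_derivative_X_sub_pow_self, eval_mul, eval_pow, eval_sub, eval_X, eval_C,
      eval_natCast, eval_C]
    have : (-1 - 1 : ℝ) = -2 := by norm_num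
    rw [this, neg_pow]
    rw [mul_comm]
    field_simp
  · intro k hk hk0
    have hkm : k < m := by
      have := Finset.mem_range.mp hk; omega
    rw [iterate_derivative_X_sub_pow m k (-1), eval_smul, eval_mul, eval_smul, eval_pow,
      eval_sub, eval_X, eval_C]
    have : (-1 - (-1) : ℝ) = 0 := by norm_num
    rw [this, zero_pow (by omega : m - k ≠ 0)]
    simp
  · intro h
    exact absurd (Finset.mem_range.mpr (Nat.lt_succ_self m)) h

lemma stmt8_legendre_one : legendre 1 = X := by
  unfold legendre
  simp [Nat.factorial]
  norm_num
  rw [show (2:ℝ[X]) = C 2 from (map_ofNat C 2).symm, ← mul_assoc, ← C_mul]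
  norm_num

lemma stmt8_geg_zero : gegenbauer32 0 = 1 := by
  rw [gegenbauer32, stmt8_legendre_one, derivative_X]

lemma stmt8_geg_eval_one (m : ℕ) :
    (gegenbauer32 m).eval 1 = ((m:ℝ)+1)*((m:ℝ)+2)/2 := by
  induction m with
  | zero => rw [stmt8_geg_zero]; norm_num
  | succ m ih =>
    rw [stmt8_geg_succ, eval_add, eval_mul, eval_mul, eval_X, eval_C, ih,
      stmt8_legendre_eval_one]
    push_cast
    ring

lemma stmt8_geg_eval_negone (m : ℕ) :
    (gegenbauer32 m).eval (-1) = (-1)^m * (((m:ℝ)+1)*((m:ℝ)+2)/2) := by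
  induction m with
  | zero => rw [stmt8_geg_zero]; norm_num
  | succ m ih =>
    rw [stmt8_geg_succ, eval_add, eval_mul, eval_mul, eval_X, eval_C, ih,
      stmt8_legendre_eval_negone]
    push_cast
    ring

lemma stmt8_rolle {k : ℕ} (F : ℝ[X]) (c : Fin (k+1) → ℝ) (hc : StrictMono c)
    (h0 : ∀ j, F.eval (c j) = 0) :
    ∃ b : Fin k → ℝ, StrictMono b ∧
      ∀ i, b i ∈ Set.Ioo (c i.castSucc) (c i.succ) ∧ (derivative F).eval (b i) = 0 := by
  have H : ∀ i : Fin k, ∃ t ∈ Set.Ioo (c i.castSucc) (c i.succ), (derivative F).eval t = 0 := by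
    intro i
    have hlt : c i.castSucc < c i.succ := hc (Fin.castSucc_lt_succ (i := i))
    obtain ⟨t, ht, h⟩ := exists_deriv_eq_zero hlt (F.continuous.continuousOn)
      (by rw [h0, h0])
    exact ⟨t, ht, by rwa [Polynomial.deriv] at h⟩
  choose b hb hb0 using H
  refine ⟨b, ?_, fun i => ⟨hb i, hb0 i⟩⟩
  match k with
  | 0 => exact fun i => i.elim0
  | k+1 =>
    rw [Fin.strictMono_iff_lt_succ]
    intro i
    have h1 : b i.castSucc < c i.castSucc.succ := (hb i.castSucc).2
    have h2 : c i.succ.castSucc < b i.succ := (hb i.succ).1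
    rw [Fin.succ_castSucc] at h1
    exact lt_trans h1 h2

/-- extend a strictly monotone family in (-1,1) by the endpoints -/
noncomputable def stmt8_ext {k : ℕ} (a : Fin k → ℝ) : Fin (k+2) → ℝ := fun j =>
  if h : (j:ℕ) = 0 then -1 else if h' : (j:ℕ) = k+1 then 1 else
    a ⟨(j:ℕ)-1, by have := j.isLt; omega⟩

lemma stmt8_ext_mono {k : ℕ} {a : Fin k → ℝ} (ha : StrictMono a)
    (hm : ∀ i, a i ∈ Set.Ioo (-1:ℝ) 1) : StrictMono (stmt8_ext a) := by
  rw [Fin.strictMono_iff_lt_succ]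
  intro i
  have hcs : ((i.castSucc) : ℕ) = (i:ℕ) := Fin.coe_castSucc i
  have hs : ((i.succ) : ℕ) = (i:ℕ)+1 := Fin.val_succ i
  have hik : (i:ℕ) < k+1 := i.isLt
  unfold stmt8_ext
  split_ifs
  all_goals try omega
  all_goals try norm_num
  all_goals try exact (Set.mem_Ioo.mp (hm _)).1
  all_goals try exact (Set.mem_Ioo.mp (hm _)).2
  all_goals exact ha (by rw [Fin.mk_lt_mk]; omega)

lemma stmt8_ext_zero {k : ℕ} (a : Fin k → ℝ) : stmt8_ext a 0 = -1 := rfl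

lemma stmt8_ext_last {k : ℕ} (a : Fin k → ℝ) : stmt8_ext a (Fin.last (k+1)) = 1 := by
  unfold stmt8_ext
  split_ifs with h1 h2
  · simp [Fin.val_last] at h1
  · rfl
  · simp [Fin.val_last] at h2

lemma stmt8_ext_mid {k : ℕ} (a : Fin k → ℝ) (i : Fin k) (h : (i:ℕ)+1 < k+2) :
    stmt8_ext a ⟨(i:ℕ)+1, h⟩ = a i := by
  have hik := i.isLt
  unfold stmt8_ext
  have e1 : ¬ ((⟨(i:ℕ)+1, h⟩ : Fin (k+2)) : ℕ) = 0 := by simp only [Fin.val_mk]; omega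
  have e2 : ¬ ((⟨(i:ℕ)+1, h⟩ : Fin (k+2)) : ℕ) = k+1 := by simp only [Fin.val_mk]; omega
  rw [dif_neg e1, dif_neg e2]
  · apply congrArg
    apply Fin.ext
    simp

lemma stmt8_coeff_aux {g : ℝ[X]} {k : ℕ} (hdeg : g.natDegree = k) :
    ((((X:ℝ[X])^2 - 1) * derivative g).coeff (k+1) = (k:ℝ) * g.coeff k)
    ∧ ((((X:ℝ[X])^2 - 1) * derivative g).natDegree ≤ k+1) := by
  match k with
  | 0 =>
    rw [eq_C_of_natDegree_eq_zero hdeg, derivative_C, mul_zero]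
    simp
  | k+1 =>
    constructor
    · rw [sub_mul, one_mul, coeff_sub]
      have h1 : (((X:ℝ[X])^2) * derivative g).coeff (k+1+1) = (derivative g).coeff k := by
        have := coeff_X_pow_mul (derivative g) 2 k
        rwa [show k+2 = k+1+1 from rfl] at this
      have h2 : (derivative g).coeff (k+1+1) = 0 := by
        apply coeff_eq_zero_of_natDegree_lt
        have := natDegree_derivative_le g
        omega
      rw [h1, h2, coeff_derivative, sub_zero]
      push_cast
      ring
    · apply natDegree_mul_le.trans
      have h3 : ((X:ℝ[X])^2 - 1).natDegree = 2 := by compute_degree!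
      have := natDegree_derivative_le g
      omega

lemma stmt8_main (m : ℕ) : ∀ k, k ≤ m → ∃ (g : ℝ[X]) (a : Fin k → ℝ),
    derivative^[k] (((X:ℝ[X])^2 - 1)^m) = ((X:ℝ[X])^2 - 1)^(m-k) * g ∧
    g.natDegree = k ∧ 0 < g.leadingCoeff ∧ StrictMono a ∧
    ∀ i, a i ∈ Set.Ioo (-1:ℝ) 1 ∧ g.eval (a i) = 0 := by
  intro k
  induction k with
  | zero =>
    intro _
    refine ⟨1, Fin.elim0, by simp, by simp, by simp, fun i => i.elim0, fun i => i.elim0⟩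
  | succ k ih =>
    intro hk
    obtain ⟨g, a, hF, hdeg, hlc, hmono, hroots⟩ := ih (by omega)
    set r := m - (k+1) with hr
    have hmk : m - k = r + 1 := by omega
    -- the new polynomial
    set h : ℝ[X] := C (2*((r:ℝ)+1)) * (X * g) + ((X:ℝ[X])^2 - 1) * derivative g with hh
    -- derivative identity
    have hD : derivative^[k+1] (((X:ℝ[X])^2 - 1)^m) = ((X:ℝ[X])^2 - 1)^r * h := by
      rw [Function.iterate_succ_apply', hF, hmk, derivative_mul, stmt8_derivSq r, hh]
      push_cast
      ring
    -- degree facts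
    have hg0 : g ≠ 0 := fun hg => by rw [hg] at hlc; simp at hlc
    have hck : g.coeff k = g.leadingCoeff := by rw [← hdeg]; rfl
    have hcoeff : h.coeff (k+1) = (2*((r:ℝ)+1) + k) * g.leadingCoeff := by
      rw [hh, coeff_add, (stmt8_coeff_aux hdeg).1, coeff_C_mul, coeff_X_mul, hck]
      ring
    have hcpos : 0 < h.coeff (k+1) := by
      rw [hcoeff]
      apply mul_pos _ hlc
      positivity
    have hdegh : h.natDegree = k+1 := by
      have hub : h.natDegree ≤ k+1 := by
        apply (natDegree_add_le _ _).trans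
        apply max_le
        · apply (natDegree_C_mul_le _ _).trans
          apply natDegree_mul_le.trans
          simp [hdeg]
          try omega
        · exact (stmt8_coeff_aux hdeg).2
      have hlb : k+1 ≤ h.natDegree := le_natDegree_of_ne_zero (ne_of_gt hcpos)
      omega
    have hlch : 0 < h.leadingCoeff := by
      rwa [leadingCoeff, hdegh]
    -- roots via Rolle
    have hmem' : ∀ i, a i ∈ Set.Ioo (-1:ℝ) 1 := fun i => (hroots i).1
    set c : Fin (k+2) → ℝ := stmt8_ext a with hc
    have hcm : StrictMono c := stmt8_ext_mono hmono hmem'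
    have hceval : ∀ j, (((X:ℝ[X])^2 - 1)^(r+1) * g).eval (c j) = 0 := by
      intro j
      rcases Nat.eq_zero_or_pos (j:ℕ) with h0 | hpos
      · have : j = 0 := Fin.ext h0
        rw [this, hc, stmt8_ext_zero]
        norm_num
      · rcases Nat.lt_or_ge (j:ℕ) (k+1) with hlt | hge
        · have hj : j = ⟨((⟨(j:ℕ)-1, by omega⟩ : Fin k) : ℕ)+1, by simp; omega⟩ := by
            apply Fin.ext; simp; omega
          rw [hj, hc, stmt8_ext_mid]
          rw [eval_mul, (hroots _).2, mul_zero]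
        · have hj : j = Fin.last (k+1) := by
            apply Fin.ext; simp [Fin.val_last]; omega
          rw [hj, hc, stmt8_ext_last]
          norm_num
    obtain ⟨b, hbmono, hb⟩ := stmt8_rolle _ c hcm hceval
    refine ⟨h, b, hD, hdegh, hlch, hbmono, ?_⟩
    intro i
    have h1 : c 0 ≤ c i.castSucc := hcm.monotone (Fin.zero_le _)
    have h2 : c i.succ ≤ c (Fin.last (k+1)) := hcm.monotone (Fin.le_last _)
    rw [hc, stmt8_ext_zero] at h1
    rw [hc, stmt8_ext_last] at h2
    have hbi : b i ∈ Set.Ioo (-1:ℝ) 1 :=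
      ⟨lt_of_le_of_lt h1 (hb i).1.1, lt_of_lt_of_le (hb i).1.2 h2⟩
    refine ⟨hbi, ?_⟩
    have heval := (hb i).2
    have hDF : derivative (((X:ℝ[X])^2 - 1)^(r+1) * g) = ((X:ℝ[X])^2 - 1)^r * h := by
      rw [← hmk, ← hF, ← Function.iterate_succ_apply' derivative k, hD]
    rw [← hmk, ← hF] at heval
    rw [← Function.iterate_succ_apply' derivative k, hD, eval_mul] at heval
    have hne : ((b i)^2 - 1) ≠ 0 := by
      have h3 : (b i)^2 < 1 := by
        rw [sq_lt_one_iff_abs_lt_one, abs_lt]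
        exact ⟨hbi.1, hbi.2⟩
      intro hcon
      nlinarith
    have : eval (b i) (((X:ℝ[X])^2-1)^r) ≠ 0 := by
      rw [eval_pow]
      apply pow_ne_zero
      simpa using hne
    exact (mul_eq_zero.mp heval).resolve_left this

lemma stmt8_roots_pack {p : ℝ[X]} {n : ℕ} (hd : p.natDegree = n) (hp : p ≠ 0)
    (x : Fin n → ℝ) (hinj : Function.Injective x) (h0 : ∀ i, p.eval (x i) = 0) :
    (∀ y, p.eval y = 0 → ∃ i, y = x i) ∧
    (∀ i, (derivative p).eval (x i) ≠ 0) ∧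
    (∀ t, p.eval t = p.leadingCoeff * ∏ i, (t - x i)) := by
  classical
  set s : Finset ℝ := Finset.image x Finset.univ with hs
  have hscard : s.card = n := by
    rw [hs, Finset.card_image_of_injective _ hinj, Finset.card_univ, Fintype.card_fin]
  have hsub : s.val ≤ p.roots := by
    rw [Finset.val_le_iff_val_subset]
    intro y hy
    rw [Finset.mem_val, hs, Finset.mem_image] at hy
    obtain ⟨i, -, rfl⟩ := hy
    rw [mem_roots hp]
    exact h0 i
  have hre : s.val = p.roots := by
    apply Multiset.eq_of_le_of_card_le hsub
    calc Multiset.card p.roots ≤ p.natDegree := p.card_roots'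
    _ = n := hd
    _ = Multiset.card s.val := by rw [← hscard]; rfl
  have hnodup : p.roots.Nodup := by rw [← hre]; exact s.nodup
  refine ⟨?_, ?_, ?_⟩
  · intro y hy
    have : y ∈ p.roots := by rw [mem_roots hp]; exact hy
    rw [← hre, Finset.mem_val, hs, Finset.mem_image] at this
    obtain ⟨i, -, hi⟩ := this
    exact ⟨i, hi.symm⟩
  · intro i hder
    have hmem : x i ∈ p.roots := by rw [mem_roots hp]; exact h0 i
    have h1 : p.roots.count (x i) = 1 := Multiset.count_eq_one_of_mem hnodup hmem
    have h2 : 1 < p.rootMultiplicity (x i) :=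
      (one_lt_rootMultiplicity_iff_isRoot hp).mpr ⟨h0 i, hder⟩
    rw [← count_roots, h1] at h2
    exact lt_irrefl 1 h2
  · intro t
    have hcard : Multiset.card p.roots = p.natDegree := by
      rw [← hre, hd]; exact hscard
    conv_lhs => rw [← C_leadingCoeff_mul_prod_multiset_X_sub_C hcard]
    rw [eval_mul, eval_C, eval_multiset_prod, Multiset.map_map]
    congr 1
    rw [← hre]
    have : ∏ i, (t - x i) = ∏ y ∈ s, (t - y) := by
      rw [hs, Finset.prod_image (fun a _ b _ h => hinj h)]
    rw [this, Finset.prod]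
    congr 1
    ext y
    simp [eval_sub]
  
lemma stmt8_prod_sign {n : ℕ} {a : Fin (n+1) → ℝ} (ha : StrictMono a) {t : ℝ} {i : Fin n}
    (h1 : a i.castSucc < t) (h2 : t < a i.succ) :
    0 < (-1:ℝ)^(n - (i:ℕ)) * ∏ j, (t - a j) := by
  classical
  rw [← Finset.prod_filter_mul_prod_filter_not Finset.univ (fun j => j ≤ i.castSucc)]
  have hpos : 0 < ∏ j ∈ Finset.univ.filter (fun j => j ≤ i.castSucc), (t - a j) := by
    apply Finset.prod_pos
    intro j hj
    have : a j ≤ a i.castSucc := ha.monotone (Finset.mem_filter.mp hj).2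
    linarith
  have hfil : Finset.univ.filter (fun j : Fin (n+1) => ¬ j ≤ i.castSucc)
      = Finset.Ioi i.castSucc := by
    ext j; simp [not_le]
  have hcard : (Finset.univ.filter (fun j : Fin (n+1) => ¬ j ≤ i.castSucc)).card
      = n - (i:ℕ) := by
    rw [hfil, Fin.card_Ioi]
    simp
  have hpos2 : 0 < ∏ j ∈ Finset.univ.filter (fun j : Fin (n+1) => ¬ j ≤ i.castSucc), (a j - t) := by
    apply Finset.prod_pos
    intro j hj
    have hj' : i.castSucc < j := not_le.mp (Finset.mem_filter.mp hj).2
    have : a i.succ ≤ a j := ha.monotone (Fin.castSucc_lt_iff_succ_le.mp hj')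
    linarith
  have hneg : ∏ j ∈ Finset.univ.filter (fun j : Fin (n+1) => ¬ j ≤ i.castSucc), (t - a j)
      = (-1:ℝ)^(n - (i:ℕ)) *
        ∏ j ∈ Finset.univ.filter (fun j : Fin (n+1) => ¬ j ≤ i.castSucc), (a j - t) := by
    rw [← hcard]
    rw [← Finset.prod_const (-1:ℝ), ← Finset.prod_mul_distrib]
    apply Finset.prod_congr rfl
    intro j _
    ring
  rw [hneg]
  have hsq : ((-1:ℝ)^(n - (i:ℕ)))^2 = 1 := by
    rw [← pow_mul, pow_mul']
    norm_num
  have key : (-1:ℝ)^(n-(i:ℕ)) * (((∏ j ∈ Finset.univ.filter (fun j : Fin (n+1) => j ≤ i.castSucc), (t - a j))) * ((-1:ℝ)^(n-(i:ℕ)) * ∏ j ∈ Finset.univ.filter (fun j : Fin (n+1) => ¬ j ≤ i.castSucc), (a j - t)))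
      = ((-1:ℝ)^(n-(i:ℕ)))^2 * ((∏ j ∈ Finset.univ.filter (fun j : Fin (n+1) => j ≤ i.castSucc), (t - a j)) * ∏ j ∈ Finset.univ.filter (fun j : Fin (n+1) => ¬ j ≤ i.castSucc), (a j - t)) := by
    ring
  rw [key, hsq, one_mul]
  exact mul_pos hpos hpos2

lemma stmt8_ivt {p : ℝ[X]} {x0 x1 : ℝ} (hlt : x0 < x1) (hs : p.eval x0 * p.eval x1 < 0) :
    ∃ t ∈ Set.Ioo x0 x1, p.eval t = 0 := by
  by_cases h0 : p.eval x0 < 0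
  · have h1 : 0 < p.eval x1 := by nlinarith
    have := intermediate_value_Ioo (le_of_lt hlt) (p.continuous.continuousOn (s := Set.Icc x0 x1))
    obtain ⟨t, ht, hteq⟩ := this (Set.mem_Ioo.mpr ⟨h0, h1⟩)
    exact ⟨t, ht, hteq⟩
  · push_neg at h0
    have h0' : 0 < p.eval x0 := by
      rcases lt_or_eq_of_le h0 with h | h
      · exact h
      · exfalso; rw [← h] at hs; simp at hs
    have h1 : p.eval x1 < 0 := by nlinarith
    have := intermediate_value_Ioo' (le_of_lt hlt) (p.continuous.continuousOn (s := Set.Icc x0 x1))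
    obtain ⟨t, ht, hteq⟩ := this (Set.mem_Ioo.mpr ⟨h1, h0'⟩)
    exact ⟨t, ht, hteq⟩

lemma stmt8_legendre_pack (m : ℕ) :
    ∃ a : Fin m → ℝ, StrictMono a ∧ (∀ i, a i ∈ Set.Ioo (-1:ℝ) 1 ∧ (legendre m).eval (a i) = 0) ∧
    (legendre m).natDegree = m ∧ 0 < (legendre m).leadingCoeff := by
  obtain ⟨g, a, hF, hdeg, hlc, hmono, hroots⟩ := stmt8_main m m le_rfl
  have hc : (0:ℝ) < (1:ℝ)/(2^m * m.factorial) := by positivity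
  have hL : legendre m = C ((1:ℝ)/(2^m * m.factorial)) * g := by
    unfold legendre
    rw [hF, Nat.sub_self, pow_zero, one_mul]
  refine ⟨a, hmono, fun i => ⟨(hroots i).1, ?_⟩, ?_, ?_⟩
  · rw [hL, eval_mul, (hroots i).2, mul_zero]
  · rw [hL, natDegree_C_mul (ne_of_gt hc), hdeg]
  · rw [hL, leadingCoeff_mul, leadingCoeff_C]
    exact mul_pos hc hlc

lemma stmt8_geg_deg (m : ℕ) :
    (gegenbauer32 m).natDegree = m ∧ 0 < (gegenbauer32 m).leadingCoeff := by
  obtain ⟨a, hmono, hroots, hdeg, hlc⟩ := stmt8_legendre_pack (m+1)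
  have hco : (gegenbauer32 m).coeff m = (legendre (m+1)).coeff (m+1) * ((m:ℝ)+1) := by
    rw [gegenbauer32, coeff_derivative]
  have hlead : (legendre (m+1)).coeff (m+1) = (legendre (m+1)).leadingCoeff := by
    rw [leadingCoeff, hdeg]
  have hpos : 0 < (gegenbauer32 m).coeff m := by
    rw [hco, hlead]
    apply mul_pos hlc
    positivity
  have hub : (gegenbauer32 m).natDegree ≤ m := by
    have := natDegree_derivative_le (legendre (m+1))
    rw [hdeg] at this
    exact this.trans (by omega)
  have hlb : m ≤ (gegenbauer32 m).natDegree := le_natDegree_of_ne_zero (ne_of_gt hpos)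
  have hd : (gegenbauer32 m).natDegree = m := le_antisymm hub hlb
  exact ⟨hd, by rwa [leadingCoeff, hd]⟩

/-- `R_n(x) = C_n(x) + δ·C_{n−1}(x)` has `n` simple real roots, all contained in `(−1,1)`. -/
theorem stmt_8 (n : ℕ) (hn : 1 ≤ n) :
    ∃ x : Fin n → ℝ, StrictMono x ∧
      (∀ i, x i ∈ Set.Ioo (-1 : ℝ) 1 ∧ (Rpoly n).eval (x i) = 0 ∧
        (derivative (Rpoly n)).eval (x i) ≠ 0) ∧
      (∀ y : ℝ, (Rpoly n).eval y = 0 → ∃ i, y = x i) := by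
  obtain ⟨N, rfl⟩ : ∃ N, n = N + 1 := ⟨n-1, by omega⟩
  clear hn
  set δ : ℝ := Real.sqrt ((((N+1 : ℕ):ℝ) + 2) / ((N+1:ℕ):ℝ)) with hδdef
  have hRdef : Rpoly (N+1) = gegenbauer32 (N+1) + C δ * gegenbauer32 N := by
    rw [Rpoly, hδdef, Nat.add_sub_cancel]
  have hNpos : (0:ℝ) < ((N:ℝ)+1) := by positivity
  have harg : (1:ℝ) < ((((N+1:ℕ)):ℝ) + 2) / ((N+1:ℕ):ℝ) := by
    rw [lt_div_iff₀ (by push_cast; positivity)]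
    push_cast
    linarith
  have hδ1 : 1 < δ := by
    rw [hδdef, show (1:ℝ) = Real.sqrt 1 by simp]
    exact Real.sqrt_lt_sqrt (by norm_num) harg
  have hδpos : 0 < δ := lt_trans one_pos hδ1
  have hδsq : δ^2 = (((N:ℝ)+1) + 2) / (((N:ℝ)+1)) := by
    rw [hδdef, Real.sq_sqrt (by push_cast; positivity)]
    push_cast
    ring_nf
  have hδbound : δ * ((N:ℝ)+1) < (N:ℝ)+3 := by
    have h2 : δ^2 * ((N:ℝ)+1) = (N:ℝ)+3 := by
      rw [hδsq]
      field_simp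
      ring
    nlinarith [mul_pos (mul_pos hδpos hNpos) (sub_pos.mpr hδ1)]
  -- legendre structure
  obtain ⟨a, hamono, haroots, hadeg, halc⟩ := stmt8_legendre_pack (N+1)
  have hPne : legendre (N+1) ≠ 0 := leadingCoeff_ne_zero.mp (ne_of_gt halc)
  obtain ⟨-, -, hPeval⟩ := stmt8_roots_pack hadeg hPne a hamono.injective
    (fun i => (haroots i).2)
  -- roots of P' by Rolle
  obtain ⟨b, hbmono, hb⟩ := stmt8_rolle (legendre (N+1)) a hamono (fun i => (haroots i).2)
  have hbmem : ∀ i, b i ∈ Set.Ioo (-1:ℝ) 1 := by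
    intro i
    have h1 := (haroots i.castSucc).1.1
    have h2 := (haroots i.succ).1.2
    exact ⟨lt_trans h1 (hb i).1.1, lt_trans (hb i).1.2 h2⟩
  have hbgeg : ∀ i, (gegenbauer32 N).eval (b i) = 0 := fun i => (hb i).2
  -- eval of R at the b i
  have hRb : ∀ i, (Rpoly (N+1)).eval (b i)
      = ((N:ℝ)+2) * (legendre (N+1)).eval (b i) := by
    intro i
    rw [hRdef, eval_add, eval_mul, eval_C, hbgeg, mul_zero, add_zero,
      stmt8_geg_succ, eval_add, eval_mul, eval_mul, eval_X, eval_C, hbgeg, mul_zero, zero_add]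
  -- endpoint evaluations
  have hR1 : (Rpoly (N+1)).eval 1
      = (((N:ℝ)+2)*((N:ℝ)+3)/2) + δ * (((N:ℝ)+1)*((N:ℝ)+2)/2) := by
    rw [hRdef, eval_add, eval_mul, eval_C, stmt8_geg_eval_one, stmt8_geg_eval_one]
    push_cast
    ring
  have hRneg1 : (Rpoly (N+1)).eval (-1)
      = (-1:ℝ)^(N+1) * (((N:ℝ)+2)*((N:ℝ)+3)/2)
        + δ * ((-1:ℝ)^N * (((N:ℝ)+1)*((N:ℝ)+2)/2)) := by
    rw [hRdef, eval_add, eval_mul, eval_C, stmt8_geg_eval_negone, stmt8_geg_eval_negone]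
    push_cast
    ring
  -- the nodes
  set c : Fin (N+2) → ℝ := stmt8_ext b with hcdef
  have hcmono : StrictMono c := stmt8_ext_mono hbmono hbmem
  have hsq1 : ∀ e : ℕ, ((-1:ℝ)^e)^2 = 1 := by
    intro e
    rw [← pow_mul, pow_mul']
    norm_num
  have hsign : ∀ j : Fin (N+2), 0 < (-1:ℝ)^(N+1-(j:ℕ)) * (Rpoly (N+1)).eval (c j) := by
    intro j
    rcases Nat.eq_zero_or_pos (j:ℕ) with h0 | hposj
    · have hj : j = 0 := Fin.ext h0
      have hN2 : (0:ℝ) < (N:ℝ)+2 := by positivity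
      have hkey : (-1:ℝ)^(N+1) * (Rpoly (N+1)).eval (-1)
          = ((N:ℝ)+2)*((N:ℝ)+3)/2 - δ*(((N:ℝ)+1)*((N:ℝ)+2)/2) := by
        rw [hRneg1, pow_succ]
        linear_combination ((((N:ℝ)+2)*((N:ℝ)+3)/2) - δ*(((N:ℝ)+1)*((N:ℝ)+2)/2)) * (hsq1 N)
      rw [hj, hcdef, stmt8_ext_zero]
      simp only [Fin.val_zero, Nat.sub_zero]
      rw [hkey]
      nlinarith [mul_pos (sub_pos.mpr hδbound) hN2]
    · rcases Nat.lt_or_ge (j:ℕ) (N+1) with hle | hge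
      · set i : Fin N := ⟨(j:ℕ)-1, by omega⟩ with hidef
        have hj2 : j = (⟨(i:ℕ)+1, by omega⟩ : Fin (N+2)) := by
          apply Fin.ext
          simp [hidef]
          omega
        have hval : (j:ℕ) = (i:ℕ)+1 := by rw [hj2]
        have hcj : c j = b i := by rw [hcdef, hj2, stmt8_ext_mid]
        rw [hcj, hval, hRb, hPeval]
        have hexp2 : N+1-((i:ℕ)+1) = N-(i:ℕ) := by omega
        rw [hexp2]
        have hps := stmt8_prod_sign hamono (hb i).1.1 (hb i).1.2
        have hrw : (-1:ℝ)^(N-(i:ℕ)) * (((N:ℝ)+2) * ((legendre (N+1)).leadingCoeff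
              * ∏ jj, (b i - a jj)))
            = (((N:ℝ)+2) * (legendre (N+1)).leadingCoeff)
              * ((-1:ℝ)^(N-(i:ℕ)) * ∏ jj, (b i - a jj)) := by ring
        rw [hrw]
        exact mul_pos (mul_pos (by positivity) halc) hps
      · have hval : (j:ℕ) = N+1 := by
          have := j.isLt
          omega
        have hj2 : j = Fin.last (N+1) := by
          apply Fin.ext
          rw [hval, Fin.val_last]
        rw [hj2, hcdef, stmt8_ext_last, Fin.val_last]
        rw [Nat.sub_self, pow_zero, one_mul, hR1]
        have hN2 : (0:ℝ) < (N:ℝ)+2 := by positivity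
        have hN3 : (0:ℝ) < (N:ℝ)+3 := by positivity
        nlinarith [mul_pos (mul_pos hδpos hNpos) hN2, mul_pos hN2 hN3]
  -- sign changes give roots
  have hopp : ∀ i : Fin (N+1),
      (Rpoly (N+1)).eval (c i.castSucc) * (Rpoly (N+1)).eval (c i.succ) < 0 := by
    intro i
    have hA := hsign i.castSucc
    have hB := hsign i.succ
    rw [Fin.coe_castSucc] at hA
    rw [Fin.val_succ] at hB
    have hiN : (i:ℕ) < N+1 := i.isLt
    have hexpA : N+1-(i:ℕ) = (N-(i:ℕ))+1 := by omega
    have hexpB : N+1-((i:ℕ)+1) = N-(i:ℕ) := by omega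
    rw [hexpA, pow_succ] at hA
    rw [hexpB] at hB
    have hs2 := hsq1 (N-(i:ℕ))
    have h3 := mul_pos hA hB
    have h4 : ((-1:ℝ)^(N-(i:ℕ)) * (-1) * (Rpoly (N+1)).eval (c i.castSucc))
          * ((-1:ℝ)^(N-(i:ℕ)) * (Rpoly (N+1)).eval (c i.succ))
        = -(((-1:ℝ)^(N-(i:ℕ)))^2 * ((Rpoly (N+1)).eval (c i.castSucc)
            * (Rpoly (N+1)).eval (c i.succ))) := by ring
    rw [h4, hs2, one_mul] at h3
    linarith
  have hx : ∀ i : Fin (N+1),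
      ∃ t ∈ Set.Ioo (c i.castSucc) (c i.succ), (Rpoly (N+1)).eval t = 0 :=
    fun i => stmt8_ivt (hcmono (Fin.castSucc_lt_succ (i := i))) (hopp i)
  choose x hxIoo hx0 using hx
  have hxmono : StrictMono x := by
    rw [Fin.strictMono_iff_lt_succ]
    intro i
    have h1 : x i.castSucc < c i.castSucc.succ := (hxIoo i.castSucc).2
    rw [Fin.succ_castSucc] at h1
    exact lt_trans h1 (hxIoo i.succ).1
  have hxmem : ∀ i, x i ∈ Set.Ioo (-1:ℝ) 1 := by
    intro i
    have h1 : c 0 ≤ c i.castSucc := hcmono.monotone (Fin.zero_le _)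
    have h2 : c i.succ ≤ c (Fin.last (N+1)) := hcmono.monotone (Fin.le_last _)
    rw [hcdef, stmt8_ext_zero] at h1
    rw [hcdef, stmt8_ext_last] at h2
    exact ⟨lt_of_le_of_lt h1 (hxIoo i).1, lt_of_lt_of_le (hxIoo i).2 h2⟩
  have hdR : (Rpoly (N+1)).natDegree = N+1 := by
    have hg1 := stmt8_geg_deg (N+1)
    have hg0 := stmt8_geg_deg N
    rw [hRdef, natDegree_add_eq_left_of_natDegree_lt, hg1.1]
    apply lt_of_le_of_lt (natDegree_C_mul_le δ _)
    rw [hg0.1, hg1.1]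
    omega
  have hRne : Rpoly (N+1) ≠ 0 := by
    intro h
    rw [h] at hdR
    simp at hdR
  obtain ⟨hcomp, hder, -⟩ := stmt8_roots_pack hdR hRne x hxmono.injective hx0
  exact ⟨x, hxmono, fun i => ⟨hxmem i, hx0 i, hder i⟩, hcomp⟩
end
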